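/- For the operators ∂₂ = ∂/∂p₁ and D acting on the polynomial ring Λ = ℚ[p₁, p₃, p₅, …], where 2D = -∂/∂p₁ + Σ_{ℓ₁,ℓ₂ ≥ 1 odd} (ℓ₁+ℓ₂) p_{ℓ₁+ℓ₂-1} ∂²/(∂p_{ℓ₁}∂p_{ℓ₂}), the commutator satisfies [∂₂, D] = ∂₂². -/

import Mathlib

open MvPolynomial

/-- The symmetric algebra `Λ = ℚ[p₁, p₃, p₅, …]`, with variable `n` representing
the power sum `p_{2n+1}` (so variable `0` is `p₁`). -/
noncomputable abbrev Lam : Type := MvPolynomial ℕ ℚ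

/-- The operator `∂₂ = ∂/∂p₁`. -/
noncomputable def del2 (f : Lam) : Lam := pderiv 0 f

/-- The operator `D` with
`2D = -∂/∂p₁ + Σ_{ℓ₁,ℓ₂ ≥ 1 odd} (ℓ₁+ℓ₂) p_{ℓ₁+ℓ₂-1} ∂²/(∂p_{ℓ₁}∂p_{ℓ₂})`.
In the indexing `p_{2a+1} = X a` the term `(ℓ₁,ℓ₂) = (2a+1,2b+1)` contributes
`(2a+2b+2) · X (a+b) · ∂²/(∂X_a ∂X_b)`.  Only variables occurring in `f`
contribute, so the a priori infinite sum is the finite sum over `f.vars`. -/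
noncomputable def Dop (f : Lam) : Lam :=
  (1 / 2 : ℚ) • (-(pderiv 0 f) +
    ∑ a ∈ f.vars, ∑ b ∈ f.vars,
      ((2 * a + 1 + (2 * b + 1) : ℕ) : ℚ) • (X (a + b) * pderiv a (pderiv b f)))

/-- Partial derivatives commute. -/
lemma pderiv_comm' (a b : ℕ) (f : Lam) :
    pderiv a (pderiv b f) = pderiv b (pderiv a f) := by
  induction f using MvPolynomial.induction_on' with
  | monomial s c =>
    rcases eq_or_ne a b with rfl | hab
    · rfl
    · simp only [pderiv_monomial]
      rw [tsub_right_comm]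
      congr 1
      simp only [Finsupp.tsub_apply, Finsupp.single_eq_of_ne' hab,
        Finsupp.single_eq_of_ne' (Ne.symm hab), Nat.sub_zero]
      ring
  | add p q hp hq => simp [map_add, hp, hq]

/-- The double sum in `Dop` can be taken over any finite set containing the
variables of `f`. -/
lemma Dop_sum_ext (f : Lam) (S : Finset ℕ) (hS : f.vars ⊆ S) :
    ∑ a ∈ S, ∑ b ∈ S,
        ((2 * a + 1 + (2 * b + 1) : ℕ) : ℚ) • (X (a + b) * pderiv a (pderiv b f))
      = ∑ a ∈ f.vars, ∑ b ∈ f.vars,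
        ((2 * a + 1 + (2 * b + 1) : ℕ) : ℚ) • (X (a + b) * pderiv a (pderiv b f)) := by
  rw [Finset.sum_subset hS (fun a _ ha => ?_)]
  · refine Finset.sum_congr rfl fun a _ => ?_
    refine (Finset.sum_subset hS fun b _ hb => ?_).symm
    rw [pderiv_eq_zero_of_notMem_vars hb]
    simp
  · apply Finset.sum_eq_zero
    intro b _
    rw [pderiv_comm', pderiv_eq_zero_of_notMem_vars ha]
    simp

/-- the commutator `[∂₂, D] = ∂₂²` on `Λ`. -/
theorem commutator_del2_Dop (f : Lam) :
    del2 (Dop f) - Dop (del2 f) = del2 (del2 f) := by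
  classical
  set T : Finset ℕ := insert 0 (f.vars ∪ (pderiv 0 f).vars) with hT
  have hTf : f.vars ⊆ T := fun x hx => by simp [hT, hx]
  have hTdf : (pderiv 0 f).vars ⊆ T := fun x hx => by simp [hT, hx]
  have h0T : (0 : ℕ) ∈ T := by simp [hT]
  unfold del2 Dop
  rw [← Dop_sum_ext f T hTf, ← Dop_sum_ext (pderiv 0 f) T hTdf]
  rw [Derivation.map_smul, map_add, map_neg, map_sum]
  simp only [map_sum, Derivation.map_smul]
  rw [← smul_sub]
  have key : ∀ a b : ℕ,
      pderiv (0 : ℕ) (X (a + b) * pderiv a (pderiv b f))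
        = pderiv 0 (X (a + b) : Lam) * pderiv a (pderiv b f)
          + X (a + b) * pderiv a (pderiv b (pderiv 0 f)) := by
    intro a b
    rw [pderiv_mul]
    congr 2
    rw [pderiv_comm' 0 a, pderiv_comm' 0 b]
  have : (-(pderiv 0 (pderiv 0 f)) + ∑ a ∈ T, ∑ b ∈ T,
        ((2 * a + 1 + (2 * b + 1) : ℕ) : ℚ) • pderiv 0 (X (a + b) * pderiv a (pderiv b f)))
      - (-(pderiv 0 (pderiv 0 f)) + ∑ a ∈ T, ∑ b ∈ T,
        ((2 * a + 1 + (2 * b + 1) : ℕ) : ℚ) •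
          (X (a + b) * pderiv a (pderiv b (pderiv 0 f))))
      = ∑ a ∈ T, ∑ b ∈ T, ((2 * a + 1 + (2 * b + 1) : ℕ) : ℚ) •
          (pderiv 0 (X (a + b) : Lam) * pderiv a (pderiv b f)) := by
    rw [add_sub_add_left_eq_sub, ← Finset.sum_sub_distrib]
    refine Finset.sum_congr rfl fun a _ => ?_
    rw [← Finset.sum_sub_distrib]
    refine Finset.sum_congr rfl fun b _ => ?_
    rw [key a b, smul_add, add_sub_cancel_right]
  rw [this]
  have hsum : ∑ a ∈ T, ∑ b ∈ T, ((2 * a + 1 + (2 * b + 1) : ℕ) : ℚ) •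
        (pderiv 0 (X (a + b) : Lam) * pderiv a (pderiv b f))
      = (2 : ℚ) • pderiv 0 (pderiv 0 f) := by
    rw [Finset.sum_eq_single_of_mem 0 h0T]
    · rw [Finset.sum_eq_single_of_mem 0 h0T]
      · norm_num
      · intro b _ hb
        rw [pderiv_X_of_ne (by simpa using hb)]
        simp
    · intro a _ ha
      apply Finset.sum_eq_zero
      intro b _
      rw [pderiv_X_of_ne (by simp [ha])]
      simp
  rw [hsum, smul_smul]
  norm_num
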